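/- Let H be a 2-vertex-connected graph on k vertices. For any partition of the edge set E_H into p ≥ 2 nonempty groups I_1, ..., I_p, letting I'_i denote the set of vertices incident to edges in I_i, we have Σ_{i=1}^p |I'_i| ≥ k + p. -/
import Mathlib


/-- A graph is 2-vertex-connected: it has at least 3 vertices and removing any
single vertex leaves it connected. -/
def TwoConnected {V : Type*} (G : SimpleGraph V) : Prop :=
  3 ≤ Nat.card V ∧ ∀ v : V, (G.induce ({v}ᶜ : Set V)).Connected

private lemma walk_mem {W : Type*} {G : SimpleGraph W} {A : Set W}
    (hcl : ∀ u v, G.Adj u v → u ∈ A → v ∈ A) :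
    ∀ {a b : W}, G.Walk a b → a ∈ A → b ∈ A := by
  intro a b w
  induction w with
  | nil => exact id
  | cons hadj p ih => exact fun ha => ih (hcl _ _ hadj ha)

private lemma no_closed {W : Type*} {G : SimpleGraph W} (hG : G.Preconnected) {A : Set W}
    (hcl : ∀ u v, G.Adj u v → u ∈ A → v ∈ A) {a b : W} (ha : a ∈ A) (hb : b ∉ A) : False := by
  obtain ⟨w⟩ := hG a b
  exact hb (walk_mem hcl w ha)

private lemma exists_adj_of_ne {W : Type*} {G : SimpleGraph W} {a b : W}
    (h : G.Reachable a b) (hab : a ≠ b) : ∃ c, G.Adj a c := by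
  obtain ⟨w⟩ := h
  cases w with
  | nil => exact absurd rfl hab
  | cons h p => exact ⟨_, h⟩

private lemma exists_third {V : Type*} [Fintype V] (h3 : 3 ≤ Fintype.card V) (u v : V) :
    ∃ w : V, w ≠ u ∧ w ≠ v := by
  classical
  by_contra h
  push_neg at h
  have hsub : (Finset.univ : Finset V) ⊆ {u, v} := by
    intro w _
    simp only [Finset.mem_insert, Finset.mem_singleton]
    rcases eq_or_ne w u with h' | h'
    · exact Or.inl h'
    · exact Or.inr (h w h')
  have h1 := Finset.card_le_card hsub
  have h2 : ({u, v} : Finset V).card ≤ 2 :=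
    (Finset.card_insert_le u {v}).trans (by simp)
  rw [Finset.card_univ] at h1
  omega

private lemma exists_mem_ne {V : Type*} (H : SimpleGraph V) (v : V) :
    ∀ e ∈ H.edgeSet, ∃ x ∈ e, x ≠ v := by
  intro e
  induction e using Sym2.ind with
  | _ x y =>
    intro he
    rw [SimpleGraph.mem_edgeSet] at he
    rcases eq_or_ne x v with rfl | hx
    · exact ⟨y, Sym2.mem_mk_right x y, (H.ne_of_adj he).symm⟩
    · exact ⟨x, Sym2.mem_mk_left x y, hx⟩

private lemma tc_conn {V : Type*} [Fintype V] (H : SimpleGraph V) (hH : TwoConnected H) :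
    H.Connected := by
  obtain ⟨h3, hind⟩ := hH
  rw [Nat.card_eq_fintype_card] at h3
  have hne : Nonempty V := Fintype.card_pos_iff.mp (by omega)
  rw [SimpleGraph.connected_iff]
  refine ⟨fun u v => ?_, hne⟩
  rcases eq_or_ne u v with rfl | huv
  · rfl
  obtain ⟨w, hwu, hwv⟩ := exists_third h3 u v
  have hu : u ∈ ({w}ᶜ : Set V) := by simp [Ne.symm hwu]
  have hv : v ∈ ({w}ᶜ : Set V) := by simp [Ne.symm hwv]
  have hr := (hind w).preconnected ⟨u, hu⟩ ⟨v, hv⟩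
  exact hr.map (SimpleGraph.Embedding.induce _).toHom

private lemma tc_adj {V : Type*} [Fintype V] (H : SimpleGraph V) (hH : TwoConnected H)
    (v : V) : ∃ u, H.Adj v u := by
  obtain ⟨h3, hind⟩ := hH
  rw [Nat.card_eq_fintype_card] at h3
  obtain ⟨w, hwv, _⟩ := exists_third h3 v v
  obtain ⟨z, hzw, hzv⟩ := exists_third h3 w v
  have hv : v ∈ ({w}ᶜ : Set V) := by simp [Ne.symm hwv]
  have hz : z ∈ ({w}ᶜ : Set V) := by simp [hzw]
  have hr := (hind w).preconnected ⟨v, hv⟩ ⟨z, hz⟩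
  obtain ⟨c, hc⟩ := exists_adj_of_ne hr
    (by simp only [ne_eq, Subtype.mk.injEq]; exact Ne.symm hzv)
  exact ⟨c.val, hc⟩

private lemma exists_inter {V : Type*} [Fintype V] {H : SimpleGraph V} (hconn : H.Connected)
    {ι : Type} [Fintype ι] (hι : 1 < Fintype.card ι)
    (I : ι → Set (Sym2 V)) (hne : ∀ i, (I i).Nonempty) (hcover : (⋃ i, I i) = H.edgeSet) :
    ∃ i j, i ≠ j ∧ ∃ v, v ∈ {v : V | ∃ e ∈ I i, v ∈ e} ∧ v ∈ {v : V | ∃ e ∈ I j, v ∈ e} := by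
  by_contra hcon
  push_neg at hcon
  obtain ⟨i0, j0, hij⟩ := Fintype.exists_pair_of_one_lt_card hι
  set A := {v : V | ∃ e ∈ I i0, v ∈ e} with hA
  have hcl : ∀ u v, H.Adj u v → u ∈ A → v ∈ A := by
    intro u v hadj hu
    have he : s(u, v) ∈ H.edgeSet := hadj
    rw [← hcover] at he
    obtain ⟨m, hm⟩ := Set.mem_iUnion.mp he
    have hum : u ∈ {v : V | ∃ e ∈ I m, v ∈ e} := ⟨s(u, v), hm, Sym2.mem_mk_left u v⟩
    have hvm : v ∈ {v : V | ∃ e ∈ I m, v ∈ e} := ⟨s(u, v), hm, Sym2.mem_mk_right u v⟩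
    rcases eq_or_ne m i0 with rfl | h
    · exact hvm
    · exact absurd hu (hcon m i0 h u hum)
  obtain ⟨e, hei⟩ := hne i0
  obtain ⟨f, hfj⟩ := hne j0
  have ha : e.out.1 ∈ A := ⟨e, hei, Sym2.out_fst_mem e⟩
  have hb : f.out.1 ∉ A := hcon j0 i0 hij.symm f.out.1 ⟨f, hfj, Sym2.out_fst_mem f⟩
  exact no_closed hconn.preconnected hcl ha hb

private lemma vset_union {V : Type*} (I J : Set (Sym2 V)) :
    {v : V | ∃ e ∈ I ∪ J, v ∈ e} = {v : V | ∃ e ∈ I, v ∈ e} ∪ {v : V | ∃ e ∈ J, v ∈ e} := by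
  ext v
  simp only [Set.mem_setOf_eq, Set.mem_union]
  aesop

private lemma main_lemma {V : Type*} [Fintype V] (H : SimpleGraph V) (hH : TwoConnected H) :
    ∀ n : ℕ, 2 ≤ n → ∀ (ι : Type) [Fintype ι] [DecidableEq ι], Fintype.card ι = n →
      ∀ (I : ι → Set (Sym2 V)),
        (∀ i, I i ⊆ H.edgeSet) → (∀ i, (I i).Nonempty) →
        (∀ i j, i ≠ j → Disjoint (I i) (I j)) → (⋃ i, I i) = H.edgeSet →
        Fintype.card V + n ≤ ∑ i, ({v : V | ∃ e ∈ I i, v ∈ e}).ncard := by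
  intro n hn
  induction n, hn using Nat.le_induction with
  | base =>
    intro ι _ _ hcard I hsub hne hdisj hcover
    have hcard2 : Nat.card ι = 2 := by rw [Nat.card_eq_fintype_card, hcard]
    obtain ⟨a, b, hab, huniv⟩ := Nat.card_eq_two_iff.mp hcard2
    have hmem : ∀ m : ι, m = a ∨ m = b := by
      intro m
      have : m ∈ ({a, b} : Set ι) := huniv ▸ Set.mem_univ m
      simpa using this
    have hsum : ∑ i, ({v : V | ∃ e ∈ I i, v ∈ e}).ncard
        = ({v : V | ∃ e ∈ I a, v ∈ e}).ncard + ({v : V | ∃ e ∈ I b, v ∈ e}).ncard := by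
      have huF : (Finset.univ : Finset ι) = {a, b} := by
        apply Finset.Subset.antisymm
        · intro m _
          simp only [Finset.mem_insert, Finset.mem_singleton]
          exact hmem m
        · exact Finset.subset_univ _
      rw [huF, Finset.sum_pair hab]
    have hcov : {v : V | ∃ e ∈ I a, v ∈ e} ∪ {v : V | ∃ e ∈ I b, v ∈ e} = Set.univ := by
      apply Set.eq_univ_of_forall
      intro v
      obtain ⟨u, hu⟩ := tc_adj H hH v
      have he : s(v, u) ∈ H.edgeSet := hu
      rw [← hcover] at he
      obtain ⟨m, hm⟩ := Set.mem_iUnion.mp he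
      rcases hmem m with rfl | rfl
      · exact Or.inl ⟨s(v, u), hm, Sym2.mem_mk_left v u⟩
      · exact Or.inr ⟨s(v, u), hm, Sym2.mem_mk_left v u⟩
    have hconn := tc_conn H hH
    obtain ⟨i, j, hij, v, hvi, hvj⟩ := exists_inter hconn (by omega) I hne hcover
    have hvab : v ∈ {v : V | ∃ e ∈ I a, v ∈ e} ∩ {v : V | ∃ e ∈ I b, v ∈ e} := by
      rcases hmem i with rfl | rfl <;> rcases hmem j with rfl | rfl
      · exact absurd rfl hij
      · exact ⟨hvi, hvj⟩
      · exact ⟨hvj, hvi⟩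
      · exact absurd rfl hij
    have hsecond : ∃ v₂, v₂ ∈ {v : V | ∃ e ∈ I a, v ∈ e} ∩ {v : V | ∃ e ∈ I b, v ∈ e}
        ∧ v₂ ≠ v := by
      by_contra hcon
      push_neg at hcon
      have hind := hH.2 v
      obtain ⟨e, hea⟩ := hne a
      obtain ⟨x0, hx0e, hx0v⟩ := exists_mem_ne H v e (hsub a hea)
      obtain ⟨f, hfb⟩ := hne b
      obtain ⟨y0, hy0f, hy0v⟩ := exists_mem_ne H v f (hsub b hfb)
      have hx0 : x0 ∈ ({v}ᶜ : Set V) := by simp [hx0v]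
      have hy0 : y0 ∈ ({v}ᶜ : Set V) := by simp [hy0v]
      set A : Set (↥({v}ᶜ : Set V)) := {y | (y : V) ∈ {w : V | ∃ e ∈ I a, w ∈ e}} with hA
      have hcl : ∀ u w, (H.induce ({v}ᶜ : Set V)).Adj u w → u ∈ A → w ∈ A := by
        intro u w hadj hu
        have he2 : s((u : V), (w : V)) ∈ H.edgeSet := hadj
        rw [← hcover] at he2
        obtain ⟨m, hm⟩ := Set.mem_iUnion.mp he2
        rcases hmem m with rfl | rfl
        · exact ⟨s((u : V), (w : V)), hm, Sym2.mem_mk_right _ _⟩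
        · have humem : (u : V) ∈ {w : V | ∃ e ∈ I a, w ∈ e} ∩ {w : V | ∃ e ∈ I m, w ∈ e} :=
            ⟨hu, ⟨s((u : V), (w : V)), hm, Sym2.mem_mk_left _ _⟩⟩
          exact absurd (hcon (u : V) humem) (Set.mem_compl_singleton_iff.mp u.2)
      have haA : (⟨x0, hx0⟩ : ↥({v}ᶜ : Set V)) ∈ A := ⟨e, hea, hx0e⟩
      have hbA : (⟨y0, hy0⟩ : ↥({v}ᶜ : Set V)) ∉ A :=
        fun hmemA => hy0v (hcon y0 ⟨hmemA, ⟨f, hfb, hy0f⟩⟩)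
      exact no_closed hind.preconnected hcl haA hbA
    obtain ⟨v₂, hv₂, hv₂v⟩ := hsecond
    have hkey := Set.ncard_union_add_ncard_inter
      {v : V | ∃ e ∈ I a, v ∈ e} {v : V | ∃ e ∈ I b, v ∈ e}
    rw [hcov, Set.ncard_univ, Nat.card_eq_fintype_card] at hkey
    have h2 : 2 ≤ ({v : V | ∃ e ∈ I a, v ∈ e} ∩ {v : V | ∃ e ∈ I b, v ∈ e}).ncard :=
      (Set.one_lt_ncard_iff (Set.toFinite _)).mpr ⟨v₂, v, hv₂, hvab, hv₂v⟩
    rw [hsum]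
    omega
  | succ n hn ih =>
    intro ι _inst _dec hcard I hsub hne hdisj hcover
    have hconn := tc_conn H hH
    obtain ⟨i, j, hij, v0, hv0i, hv0j⟩ := exists_inter hconn (by omega) I hne hcover
    let f : ι → ℕ := fun m => ({v : V | ∃ e ∈ I m, v ∈ e}).ncard
    let J : {x : ι // x ≠ j} → Set (Sym2 V) := fun x => if x.val = i then I i ∪ I j else I x.val
    have hcard' : Fintype.card {x : ι // x ≠ j} = n := by
      have h1 : Fintype.card {x : ι // ¬ x = j}
          = Fintype.card ι - Fintype.card {x : ι // x = j} := Fintype.card_subtype_compl _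
      rw [Fintype.card_subtype_eq, hcard] at h1
      simpa using h1
    have hJsub : ∀ x, J x ⊆ H.edgeSet := by
      intro x
      by_cases h : x.val = i
      · simp only [J, if_pos h]
        exact Set.union_subset (hsub i) (hsub j)
      · simp only [J, if_neg h]
        exact hsub x.val
    have hJne : ∀ x, (J x).Nonempty := by
      intro x
      by_cases h : x.val = i
      · simp only [J, if_pos h]
        exact (hne i).inl
      · simp only [J, if_neg h]
        exact hne x.val
    have hJdisj : ∀ x y, x ≠ y → Disjoint (J x) (J y) := by
      intro x y hxy
      have hval : x.val ≠ y.val := fun h => hxy (Subtype.ext h)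
      by_cases hx : x.val = i <;> by_cases hy : y.val = i
      · exact absurd (hx.trans hy.symm) hval
      · simp only [J, if_pos hx, if_neg hy]
        exact Disjoint.union_left (hdisj i y.val (fun h => hy h.symm))
          (hdisj j y.val (Ne.symm y.prop))
      · simp only [J, if_neg hx, if_pos hy]
        exact Disjoint.union_right (hdisj x.val i hx) (hdisj x.val j x.prop)
      · simp only [J, if_neg hx, if_neg hy]
        exact hdisj x.val y.val hval
    have hJcover : (⋃ x, J x) = H.edgeSet := by
      rw [← hcover]
      apply Set.Subset.antisymm
      · refine Set.iUnion_subset fun x => ?_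
        by_cases h : x.val = i
        · simp only [J, if_pos h]
          exact Set.union_subset (Set.subset_iUnion I i) (Set.subset_iUnion I j)
        · simp only [J, if_neg h]
          exact Set.subset_iUnion I x.val
      · refine Set.iUnion_subset fun m => ?_
        intro e he
        rcases eq_or_ne m j with rfl | hmj
        · refine Set.mem_iUnion.mpr ⟨⟨i, hij⟩, ?_⟩
          simp only [J, if_pos rfl]
          exact Or.inr he
        · rcases eq_or_ne m i with rfl | hmi
          · refine Set.mem_iUnion.mpr ⟨⟨m, hmj⟩, ?_⟩
            simp only [J, if_pos rfl]
            exact Or.inl he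
          · refine Set.mem_iUnion.mpr ⟨⟨m, hmj⟩, ?_⟩
            simp only [J, if_neg hmi]
            exact he
    have hIH := ih {x : ι // x ≠ j} hcard' J hJsub hJne hJdisj hJcover
    let F : ι → ℕ := fun m => ({v : V | ∃ e ∈ (if m = i then I i ∪ I j else I m), v ∈ e}).ncard
    have hs1 : ∑ x : {x : ι // x ≠ j}, ({v : V | ∃ e ∈ J x, v ∈ e}).ncard
        = ∑ m ∈ Finset.univ.erase j, F m := by
      rw [Finset.sum_subtype (p := fun x => x ≠ j) (Finset.univ.erase j)
        (fun x => by simp) F]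
    have hiinerase : i ∈ Finset.univ.erase j := Finset.mem_erase.mpr ⟨hij, Finset.mem_univ i⟩
    have hs2 : ∑ m ∈ Finset.univ.erase j, F m
        = F i + ∑ m ∈ (Finset.univ.erase j).erase i, F m :=
      (Finset.add_sum_erase _ F hiinerase).symm
    have hs3 : ∑ m ∈ (Finset.univ.erase j).erase i, F m
        = ∑ m ∈ (Finset.univ.erase j).erase i, f m :=
      Finset.sum_congr rfl (fun m hm => by
        have hmi : m ≠ i := (Finset.mem_erase.mp hm).1
        simp only [F, f, if_neg hmi])
    have hs4 : ∑ m, f m = f j + (f i + ∑ m ∈ (Finset.univ.erase j).erase i, f m) := by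
      rw [Finset.add_sum_erase _ f hiinerase, Finset.add_sum_erase _ f (Finset.mem_univ j)]
    have hkey : F i + 1 ≤ f i + f j := by
      have hvu : {v : V | ∃ e ∈ I i ∪ I j, v ∈ e}
          = {v : V | ∃ e ∈ I i, v ∈ e} ∪ {v : V | ∃ e ∈ I j, v ∈ e} := vset_union _ _
      have h1 := Set.ncard_union_add_ncard_inter
        {v : V | ∃ e ∈ I i, v ∈ e} {v : V | ∃ e ∈ I j, v ∈ e}
      have h2 : 1 ≤ ({v : V | ∃ e ∈ I i, v ∈ e} ∩ {v : V | ∃ e ∈ I j, v ∈ e}).ncard :=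
        (Set.ncard_pos (Set.toFinite _)).mpr ⟨v0, hv0i, hv0j⟩
      have hFi : F i = ({v : V | ∃ e ∈ I i, v ∈ e} ∪ {v : V | ∃ e ∈ I j, v ∈ e}).ncard := by
        simp only [F, eq_self_iff_true, if_true, hvu]
      have hmain : ({v : V | ∃ e ∈ I i, v ∈ e} ∪ {v : V | ∃ e ∈ I j, v ∈ e}).ncard + 1
          ≤ ({v : V | ∃ e ∈ I i, v ∈ e}).ncard + ({v : V | ∃ e ∈ I j, v ∈ e}).ncard := by
        omega
      rw [hFi]
      exact hmain
    rw [hs1, hs2, hs3] at hIH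
    show Fintype.card V + (n + 1) ≤ ∑ m, f m
    omega

theorem stmt_0 {V : Type*} [Fintype V] (k : ℕ) (hk : Fintype.card V = k)
    (H : SimpleGraph V) (hH : TwoConnected H)
    (p : ℕ) (hp : 2 ≤ p) (I : Fin p → Set (Sym2 V))
    (hsub : ∀ i, I i ⊆ H.edgeSet)
    (hne : ∀ i, (I i).Nonempty)
    (hdisj : ∀ i j, i ≠ j → Disjoint (I i) (I j))
    (hcover : (⋃ i, I i) = H.edgeSet) :
    k + p ≤ ∑ i : Fin p, ({v : V | ∃ e ∈ I i, v ∈ e}).ncard := by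
  subst hk
  exact main_lemma H hH p hp (Fin p) (by simp) I hsub hne hdisj hcover
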